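/- EM monotonicity (finite latent variable version): let X be a finite set, Θ a type, and p : Θ → X → ℝ a family of strictly positive joint weights with marginal ℓ(θ) = ∑_x p(θ)(x). Define Q(θ, θ') = ∑_x (p(θ)(x)/ℓ(θ)) · log p(θ')(x). If Q(θ, θ') ≥ Q(θ, θ), then log ℓ(θ') ≥ log ℓ(θ). -/

import Mathlib

open Finset

theorem stmt5 {X : Type*} [Fintype X] [Nonempty X] {Θ : Type*}
    (p : Θ → X → ℝ) (hp : ∀ θ x, 0 < p θ x) (θ θ' : Θ)
    (h : (∑ x, (p θ x / ∑ x', p θ x') * Real.log (p θ' x))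
        ≥ ∑ x, (p θ x / ∑ x', p θ x') * Real.log (p θ x)) :
    Real.log (∑ x, p θ' x) ≥ Real.log (∑ x, p θ x) := by
  have hS : (0:ℝ) < ∑ x', p θ x' := Finset.sum_pos (fun x _ => hp θ x) Finset.univ_nonempty
  have hS' : (0:ℝ) < ∑ x', p θ' x' := Finset.sum_pos (fun x _ => hp θ' x) Finset.univ_nonempty
  set S := ∑ x', p θ x' with hSdef
  set S' := ∑ x', p θ' x' with hS'def
  have hsum1 : ∑ x, p θ x / S = 1 := by
    rw [← Finset.sum_div, ← hSdef, div_self hS.ne']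
  have key : ∑ x, (p θ x / S) * Real.log ((p θ' x / S') / (p θ x / S)) ≤ 0 := by
    calc ∑ x, (p θ x / S) * Real.log ((p θ' x / S') / (p θ x / S))
        ≤ ∑ x, (p θ x / S) * ((p θ' x / S') / (p θ x / S) - 1) := by
          apply Finset.sum_le_sum
          intro x _
          have hq : 0 < p θ x / S := div_pos (hp θ x) hS
          exact mul_le_mul_of_nonneg_left
            (Real.log_le_sub_one_of_pos (div_pos (div_pos (hp θ' x) hS') hq)) hq.le
      _ = ∑ x, (p θ' x / S' - p θ x / S) := by
          apply Finset.sum_congr rfl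
          intro x _
          have hq : p θ x ≠ 0 := (hp θ x).ne'
          field_simp
      _ = 0 := by
          rw [Finset.sum_sub_distrib, ← Finset.sum_div, ← Finset.sum_div, ← hSdef, ← hS'def,
            div_self hS.ne', div_self hS'.ne', sub_self]
  have expand : ∑ x, (p θ x / S) * Real.log ((p θ' x / S') / (p θ x / S))
      = (∑ x, (p θ x / S) * Real.log (p θ' x)) - (∑ x, (p θ x / S) * Real.log (p θ x))
        - Real.log S' + Real.log S := by
    have hterm : ∀ x, (p θ x / S) * Real.log ((p θ' x / S') / (p θ x / S))
        = (p θ x / S) * Real.log (p θ' x) - (p θ x / S) * Real.log (p θ x)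
          - (p θ x / S) * Real.log S' + (p θ x / S) * Real.log S := by
      intro x
      rw [Real.log_div (div_pos (hp θ' x) hS').ne' (div_pos (hp θ x) hS).ne',
        Real.log_div (hp θ' x).ne' hS'.ne', Real.log_div (hp θ x).ne' hS.ne']
      ring
    simp only [hterm, Finset.sum_add_distrib, Finset.sum_sub_distrib, ← Finset.sum_mul, hsum1,
      one_mul]
  rw [expand] at key
  linarith
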